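/- Let b ∈ (3/2, 2], δ > 0, and K₁, K₂ ≥ 0. Let (A_n)_{n ≥ 1} be real random variables on a probability space with E[|A_n|^{2b}] ≤ K₁ n and E[A_n²] ≤ K₂ for all n ≥ 1. Then E[A_n² · 1_{|A_n| ≥ δ n}] ≤ K₁^{1/b} K₂^{(b−1)/b} δ^{−2(b−1)/b} n^{(3−2b)/b} for all n ≥ 1, and in particular E[A_n² · 1_{|A_n| ≥ δ n}] → 0 as n → ∞. -/

import Mathlib

open MeasureTheory Real Filter

theorem lindeberg_condition_verification
    {Ω : Type*} [MeasurableSpace Ω] (μ : Measure Ω) [IsProbabilityMeasure μ]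
    (b δ K₁ K₂ : ℝ) (hb : b ∈ Set.Ioc (3 / 2 : ℝ) 2) (hδ : 0 < δ)
    (hK₁ : 0 ≤ K₁) (hK₂ : 0 ≤ K₂)
    (A : ℕ → Ω → ℝ) (hA : ∀ n, Measurable (A n))
    (hAint : ∀ n, Integrable (fun ω => |A n ω| ^ (2 * b)) μ)
    (hmom : ∀ n : ℕ, 1 ≤ n → ∫ ω, |A n ω| ^ (2 * b) ∂μ ≤ K₁ * n)
    (hvar : ∀ n : ℕ, 1 ≤ n → ∫ ω, (A n ω) ^ 2 ∂μ ≤ K₂) :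
    (∀ n : ℕ, 1 ≤ n →
      ∫ ω in {ω | δ * n ≤ |A n ω|}, (A n ω) ^ 2 ∂μ
        ≤ K₁ ^ (1 / b) * K₂ ^ ((b - 1) / b) * δ ^ (-(2 * (b - 1) / b))
            * (n : ℝ) ^ ((3 - 2 * b) / b)) ∧
    Tendsto (fun n : ℕ => ∫ ω in {ω | δ * n ≤ |A n ω|}, (A n ω) ^ 2 ∂μ)
      atTop (nhds 0) := by
  obtain ⟨hb1, hb2⟩ := hb
  have hb0 : (0:ℝ) < b := by linarith
  have hb1' : (1:ℝ) < b := by linarith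
  have hbne : b ≠ 0 := ne_of_gt hb0
  set q : ℝ := b / (b - 1) with hqdef
  have hpq : b.HolderConjugate q := by
    exact (Real.holderConjugate_iff_eq_conjExponent hb1').mpr hqdef
  have hq2 : 1 / q = (b - 1) / b := by rw [hqdef, one_div_div]
  have main : ∀ n : ℕ, 1 ≤ n →
      ∫ ω in {ω | δ * n ≤ |A n ω|}, (A n ω) ^ 2 ∂μ
        ≤ K₁ ^ (1 / b) * K₂ ^ ((b - 1) / b) * δ ^ (-(2 * (b - 1) / b))
            * (n : ℝ) ^ ((3 - 2 * b) / b) := by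
    intro n hn
    set S : Set Ω := {ω | δ * n ≤ |A n ω|} with hSdef
    have hN1 : (1:ℝ) ≤ (n:ℝ) := by exact_mod_cast hn
    have hN0 : (0:ℝ) < n := by linarith
    have hT0 : (0:ℝ) < δ * n := mul_pos hδ hN0
    have hSm : MeasurableSet S := measurableSet_le measurable_const (hA n).abs
    -- pointwise identity ((A)^2)^b = |A|^(2b)
    have habs : ∀ ω, ((A n ω) ^ 2 : ℝ) ^ b = |A n ω| ^ (2 * b) := by
      intro ω
      rw [← sq_abs (A n ω), ← Real.rpow_natCast |A n ω| 2,
        ← Real.rpow_mul (abs_nonneg _)]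
      norm_num
    -- integrability of A^2
    have hint2 : Integrable (fun ω => (A n ω) ^ 2) μ := by
      refine ((integrable_const (1:ℝ)).add (hAint n)).mono'
        ((hA n).pow_const 2).aestronglyMeasurable (ae_of_all _ fun ω => ?_)
      rw [Real.norm_eq_abs, abs_of_nonneg (sq_nonneg _)]
      simp only [Pi.add_apply]
      rcases le_total (|A n ω|) 1 with h | h
      · have h1 : (A n ω) ^ 2 ≤ 1 := by
          rw [← sq_abs]; exact pow_le_one₀ (abs_nonneg _) h
        have h2 : (0:ℝ) ≤ |A n ω| ^ (2 * b) := Real.rpow_nonneg (abs_nonneg _) _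
        linarith
      · have h1 : (A n ω) ^ 2 = |A n ω| ^ ((2:ℕ) : ℝ) := by
          rw [Real.rpow_natCast, sq_abs]
        have h2 : |A n ω| ^ ((2:ℕ) : ℝ) ≤ |A n ω| ^ (2 * b) :=
          Real.rpow_le_rpow_of_exponent_le h (by push_cast; linarith)
        linarith
    -- Memℒp of A^2 at exponent b
    have hob : (ENNReal.ofReal b) ≠ 0 := by
      simp [ENNReal.ofReal_eq_zero, not_le, hb0]
    have hmem1 : MemLp (fun ω => (A n ω) ^ 2) (ENNReal.ofReal b) μ := by
      refine (memLp_norm_rpow_iff ((hA n).pow_const 2).aestronglyMeasurable hob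
        ENNReal.ofReal_ne_top).mp ?_
      rw [ENNReal.div_self hob ENNReal.ofReal_ne_top, memLp_one_iff_integrable]
      have heq : (fun ω => ‖(A n ω) ^ 2‖ ^ (ENNReal.ofReal b).toReal)
          = fun ω => |A n ω| ^ (2 * b) := by
        funext ω
        rw [ENNReal.toReal_ofReal hb0.le, Real.norm_eq_abs,
          abs_of_nonneg (sq_nonneg _), habs ω]
      rw [heq]
      exact hAint n
    have hmemq : MemLp (S.indicator (fun _ => (1:ℝ))) (ENNReal.ofReal q) μ :=
      (memLp_const 1).indicator hSm
    -- Hölder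
    have holder := integral_mul_le_Lp_mul_Lq_of_nonneg hpq
      (ae_of_all _ fun ω => sq_nonneg (A n ω))
      (ae_of_all _ fun ω => Set.indicator_nonneg (fun _ _ => zero_le_one) ω)
      hmem1 hmemq
    have hLHS : ∫ ω in S, (A n ω) ^ 2 ∂μ
        = ∫ ω, (A n ω) ^ 2 * S.indicator (fun _ => (1:ℝ)) ω ∂μ := by
      rw [← integral_indicator hSm]
      congr 1; funext ω
      by_cases h : ω ∈ S <;> simp [h]
    have h1 : ∫ ω, ((A n ω) ^ 2 : ℝ) ^ b ∂μ = ∫ ω, |A n ω| ^ (2 * b) ∂μ := by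
      simp_rw [habs]
    have hind : ∫ ω, (S.indicator (fun _ => (1:ℝ)) ω) ^ q ∂μ = (μ S).toReal := by
      have hptw : ∀ ω, (S.indicator (fun _ => (1:ℝ)) ω) ^ q
          = S.indicator (fun _ => (1:ℝ)) ω := by
        intro ω
        by_cases h : ω ∈ S <;>
          simp [h, Real.one_rpow, Real.zero_rpow hpq.symm.ne_zero]
      simp_rw [hptw]
      rw [integral_indicator_const (1:ℝ) hSm, smul_eq_mul, mul_one, measureReal_def]
    -- Chebyshev
    have hSeq : S = {ω | (δ * n) ^ 2 ≤ (A n ω) ^ 2} := by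
      ext ω
      simp only [hSdef, Set.mem_setOf_eq]
      rw [← sq_abs (A n ω)]
      exact (pow_le_pow_iff_left₀ hT0.le (abs_nonneg _) two_ne_zero).symm
    have cheb := mul_meas_ge_le_integral_of_nonneg
      (ae_of_all μ fun ω => sq_nonneg (A n ω)) hint2 ((δ * n) ^ 2)
    have hμS : (μ S).toReal ≤ K₂ / (δ * n) ^ 2 := by
      rw [le_div_iff₀ (pow_pos hT0 2), hSeq]
      have := hvar n hn
      rw [measureReal_def] at cheb
      nlinarith [cheb]
    -- combine
    have step : ∫ ω in S, (A n ω) ^ 2 ∂μ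
        ≤ (K₁ * n) ^ (1 / b) * (K₂ / (δ * n) ^ 2) ^ ((b - 1) / b) := by
      calc ∫ ω in S, (A n ω) ^ 2 ∂μ
          = ∫ ω, (A n ω) ^ 2 * S.indicator (fun _ => (1:ℝ)) ω ∂μ := hLHS
        _ ≤ (∫ ω, ((A n ω) ^ 2 : ℝ) ^ b ∂μ) ^ (1 / b)
            * (∫ ω, (S.indicator (fun _ => (1:ℝ)) ω) ^ q ∂μ) ^ (1 / q) := holder
        _ = (∫ ω, |A n ω| ^ (2 * b) ∂μ) ^ (1 / b)
            * (μ S).toReal ^ ((b - 1) / b) := by rw [h1, hind, hq2]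
        _ ≤ (K₁ * n) ^ (1 / b) * (K₂ / (δ * n) ^ 2) ^ ((b - 1) / b) := by
            refine mul_le_mul ?_ ?_ ?_ ?_
            · exact Real.rpow_le_rpow
                (integral_nonneg fun ω => Real.rpow_nonneg (abs_nonneg _) _)
                (hmom n hn) (div_nonneg zero_le_one hb0.le)
            · exact Real.rpow_le_rpow ENNReal.toReal_nonneg hμS
                (div_nonneg (by linarith) hb0.le)
            · exact Real.rpow_nonneg ENNReal.toReal_nonneg _
            · exact Real.rpow_nonneg (by positivity) _
    refine step.trans_eq ?_
    have e1 : ((δ * (n:ℝ)) ^ 2 : ℝ) = δ ^ ((2:ℕ):ℝ) * (n:ℝ) ^ ((2:ℕ):ℝ) := by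
      rw [Real.rpow_natCast, Real.rpow_natCast, mul_pow]
    have hexp1 : -(2 * (b - 1) / b) = -(((2:ℕ):ℝ) * ((b - 1) / b)) := by
      push_cast; ring
    have hexp2 : (3 - 2 * b) / b = 1 / b + -(((2:ℕ):ℝ) * ((b - 1) / b)) := by
      push_cast; field_simp; ring
    rw [hexp1, hexp2, Real.mul_rpow hK₁ hN0.le,
      Real.div_rpow hK₂ (sq_nonneg _), e1,
      Real.mul_rpow (Real.rpow_nonneg hδ.le _) (Real.rpow_nonneg hN0.le _),
      ← Real.rpow_mul hδ.le, ← Real.rpow_mul hN0.le,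
      Real.rpow_add hN0, Real.rpow_neg hδ.le, Real.rpow_neg hN0.le]
    field_simp
  refine ⟨main, ?_⟩
  have hexp : 0 < (2 * b - 3) / b := by
    apply div_pos <;> linarith
  have ht : Tendsto (fun n : ℕ =>
      K₁ ^ (1 / b) * K₂ ^ ((b - 1) / b) * δ ^ (-(2 * (b - 1) / b))
        * (n : ℝ) ^ ((3 - 2 * b) / b)) atTop (nhds 0) := by
    have h0 : Tendsto (fun x : ℝ => x ^ (-((2 * b - 3) / b))) atTop (nhds 0) :=
      tendsto_rpow_neg_atTop hexp
    have h1 := (h0.comp tendsto_natCast_atTop_atTop).const_mul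
      (K₁ ^ (1 / b) * K₂ ^ ((b - 1) / b) * δ ^ (-(2 * (b - 1) / b)))
    have he : -((2 * b - 3) / b) = (3 - 2 * b) / b := by ring
    simpa [Function.comp, he, mul_zero] using h1
  refine tendsto_of_tendsto_of_tendsto_of_le_of_le' tendsto_const_nhds ht
    (Eventually.of_forall fun n => integral_nonneg fun ω => sq_nonneg _) ?_
  filter_upwards [eventually_ge_atTop 1] with n hn using main n hn
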